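/- If M ⊥ R | X, Y, G=1, then the odds ratio OR(y,x,m) = [p(Y=y | R=0, X=x, M=m, G=1) / p(Y=y | R=1, X=x, M=m, G=1)] · [p(Y=0 | R=1, X=x, M=m, G=1) / p(Y=0 | R=0, X=x, M=m, G=1)] does not depend on m; indeed it equals [p(R=0 | X=x, Y=y, G=1)/p(R=1 | X=x, Y=y, G=1)] · [p(R=1 | X=x, Y=0, G=1)/p(R=0 | X=x, Y=0, G=1)]. -/

import Mathlib

open Finset Set Real

noncomputable def Pr {Ω : Type*} [Fintype Ω] (μ : Ω → ℝ) (A : Set Ω) : ℝ :=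
  ∑ ω, A.indicator μ ω

noncomputable def cPr {Ω : Type*} [Fintype Ω] (μ : Ω → ℝ) (A B : Set Ω) : ℝ :=
  Pr μ (A ∩ B) / Pr μ B

noncomputable def cE {Ω : Type*} [Fintype Ω] (μ : Ω → ℝ) (f : Ω → ℝ) (B : Set Ω) : ℝ :=
  (∑ ω, B.indicator (fun ω' => μ ω' * f ω') ω) / Pr μ B

noncomputable def OddsR {Ω 𝓧 : Type*} [Fintype Ω] (μ : Ω → ℝ) (X : Ω → 𝓧) (Y : Ω → ℝ)
    (R G : Ω → ℕ) (x : 𝓧) (y : ℝ) : ℝ :=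
  (cPr μ {ω | R ω = 0} {ω | X ω = x ∧ Y ω = y ∧ G ω = 1} *
      cPr μ {ω | R ω = 1} {ω | X ω = x ∧ Y ω = 0 ∧ G ω = 1}) /
  (cPr μ {ω | R ω = 1} {ω | X ω = x ∧ Y ω = y ∧ G ω = 1} *
      cPr μ {ω | R ω = 0} {ω | X ω = x ∧ Y ω = 0 ∧ G ω = 1})

lemma Pr_mono' {Ω : Type*} [Fintype Ω] {μ : Ω → ℝ} (hμ0 : ∀ ω, 0 ≤ μ ω)
    {A B : Set Ω} (h : A ⊆ B) : Pr μ A ≤ Pr μ B :=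
  Finset.sum_le_sum fun ω _ => Set.indicator_le_indicator_of_subset h hμ0 ω

lemma Pr_congr' {Ω : Type*} [Fintype Ω] (μ : Ω → ℝ) {A B : Set Ω} (h : A = B) :
    Pr μ A = Pr μ B := by rw [h]

theorem stmt1
    {Ω 𝓧 𝓜 : Type*} [Fintype Ω]
    (μ : Ω → ℝ) (X : Ω → 𝓧) (M : Ω → 𝓜) (Y : Ω → ℝ) (R G : Ω → ℕ)
    (hμ0 : ∀ ω, 0 ≤ μ ω) (hμ1 : ∑ ω, μ ω = 1)
    (hR : ∀ ω, R ω = 0 ∨ R ω = 1)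
    (h0Y : (0 : ℝ) ∈ Set.range Y)
    (hpos : ∀ x ∈ Set.range X, ∀ m ∈ Set.range M, ∀ y ∈ Set.range Y, ∀ r : ℕ,
      (r = 0 ∨ r = 1) →
      0 < Pr μ {ω | X ω = x ∧ M ω = m ∧ Y ω = y ∧ R ω = r ∧ G ω = 1})
    (hCI : ∀ (m : 𝓜) (r : ℕ) (x : 𝓧) (y : ℝ),
      0 < Pr μ {ω | X ω = x ∧ Y ω = y ∧ G ω = 1} →
      cPr μ {ω | M ω = m ∧ R ω = r} {ω | X ω = x ∧ Y ω = y ∧ G ω = 1} =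
        cPr μ {ω | M ω = m} {ω | X ω = x ∧ Y ω = y ∧ G ω = 1} *
        cPr μ {ω | R ω = r} {ω | X ω = x ∧ Y ω = y ∧ G ω = 1})
 :
    ∀ x ∈ Set.range X, ∀ y ∈ Set.range Y, ∀ m ∈ Set.range M,
      (cPr μ {ω | Y ω = y} {ω | R ω = 0 ∧ X ω = x ∧ M ω = m ∧ G ω = 1} /
          cPr μ {ω | Y ω = y} {ω | R ω = 1 ∧ X ω = x ∧ M ω = m ∧ G ω = 1}) *
        (cPr μ {ω | Y ω = 0} {ω | R ω = 1 ∧ X ω = x ∧ M ω = m ∧ G ω = 1} /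
          cPr μ {ω | Y ω = 0} {ω | R ω = 0 ∧ X ω = x ∧ M ω = m ∧ G ω = 1}) =
      OddsR μ X Y R G x y := by
  intro x hx y hy m hm
  -- positivity of the atoms A y' r
  have hA : ∀ y' ∈ Set.range Y, ∀ r : ℕ, (r = 0 ∨ r = 1) →
      0 < Pr μ {ω | X ω = x ∧ M ω = m ∧ Y ω = y' ∧ R ω = r ∧ G ω = 1} :=
    fun y' hy' r hr => hpos x hx m hm y' hy' r hr
  have hAy0 := hA y hy 0 (Or.inl rfl)
  have hAy1 := hA y hy 1 (Or.inr rfl)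
  have hAz0 := hA 0 h0Y 0 (Or.inl rfl)
  have hAz1 := hA 0 h0Y 1 (Or.inr rfl)
  -- conditioning sets
  have hB0 : 0 < Pr μ {ω | R ω = 0 ∧ X ω = x ∧ M ω = m ∧ G ω = 1} :=
    lt_of_lt_of_le hAy0 (Pr_mono' hμ0 (fun ω h => by
      simp only [Set.mem_setOf_eq] at h ⊢ <;> tauto))
  have hB1 : 0 < Pr μ {ω | R ω = 1 ∧ X ω = x ∧ M ω = m ∧ G ω = 1} :=
    lt_of_lt_of_le hAy1 (Pr_mono' hμ0 (fun ω h => by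
      simp only [Set.mem_setOf_eq] at h ⊢ <;> tauto))
  have hCy : 0 < Pr μ {ω | X ω = x ∧ Y ω = y ∧ G ω = 1} :=
    lt_of_lt_of_le hAy0 (Pr_mono' hμ0 (fun ω h => by
      simp only [Set.mem_setOf_eq] at h ⊢ <;> tauto))
  have hCz : 0 < Pr μ {ω | X ω = x ∧ Y ω = 0 ∧ G ω = 1} :=
    lt_of_lt_of_le hAz0 (Pr_mono' hμ0 (fun ω h => by
      simp only [Set.mem_setOf_eq] at h ⊢ <;> tauto))
  -- P(R=r ∩ C_y')
  have hP : ∀ (y' : ℝ) (r : ℕ),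
      Pr μ ({ω | R ω = r} ∩ {ω | X ω = x ∧ Y ω = y' ∧ G ω = 1}) =
      Pr μ {ω | R ω = r ∧ X ω = x ∧ Y ω = y' ∧ G ω = 1} := by
    intro y' r; apply Pr_congr'; ext ω
    simp only [Set.mem_inter_iff, Set.mem_setOf_eq] <;> tauto
  have hP0y : 0 < Pr μ {ω | R ω = 0 ∧ X ω = x ∧ Y ω = y ∧ G ω = 1} :=
    lt_of_lt_of_le hAy0 (Pr_mono' hμ0 (fun ω h => by
      simp only [Set.mem_setOf_eq] at h ⊢ <;> tauto))
  have hP1y : 0 < Pr μ {ω | R ω = 1 ∧ X ω = x ∧ Y ω = y ∧ G ω = 1} :=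
    lt_of_lt_of_le hAy1 (Pr_mono' hμ0 (fun ω h => by
      simp only [Set.mem_setOf_eq] at h ⊢ <;> tauto))
  have hP0z : 0 < Pr μ {ω | R ω = 0 ∧ X ω = x ∧ Y ω = 0 ∧ G ω = 1} :=
    lt_of_lt_of_le hAz0 (Pr_mono' hμ0 (fun ω h => by
      simp only [Set.mem_setOf_eq] at h ⊢ <;> tauto))
  have hP1z : 0 < Pr μ {ω | R ω = 1 ∧ X ω = x ∧ Y ω = 0 ∧ G ω = 1} :=
    lt_of_lt_of_le hAz1 (Pr_mono' hμ0 (fun ω h => by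
      simp only [Set.mem_setOf_eq] at h ⊢ <;> tauto))
  -- the key consequence of conditional independence
  have key : ∀ y' : ℝ, 0 < Pr μ {ω | X ω = x ∧ Y ω = y' ∧ G ω = 1} →
      Pr μ {ω | X ω = x ∧ M ω = m ∧ Y ω = y' ∧ R ω = 0 ∧ G ω = 1} *
        Pr μ {ω | R ω = 1 ∧ X ω = x ∧ Y ω = y' ∧ G ω = 1} =
      Pr μ {ω | X ω = x ∧ M ω = m ∧ Y ω = y' ∧ R ω = 1 ∧ G ω = 1} *
        Pr μ {ω | R ω = 0 ∧ X ω = x ∧ Y ω = y' ∧ G ω = 1} := by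
    intro y' hCy'
    have h0 := hCI m 0 x y' hCy'
    have h1 := hCI m 1 x y' hCy'
    unfold cPr at h0 h1
    rw [div_eq_iff hCy'.ne'] at h0 h1
    have e0 : Pr μ ({ω | M ω = m ∧ R ω = 0} ∩ {ω | X ω = x ∧ Y ω = y' ∧ G ω = 1}) =
        Pr μ {ω | X ω = x ∧ M ω = m ∧ Y ω = y' ∧ R ω = 0 ∧ G ω = 1} := by
      apply Pr_congr'; ext ω
      simp only [Set.mem_inter_iff, Set.mem_setOf_eq] <;> tauto
    have e1 : Pr μ ({ω | M ω = m ∧ R ω = 1} ∩ {ω | X ω = x ∧ Y ω = y' ∧ G ω = 1}) =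
        Pr μ {ω | X ω = x ∧ M ω = m ∧ Y ω = y' ∧ R ω = 1 ∧ G ω = 1} := by
      apply Pr_congr'; ext ω
      simp only [Set.mem_inter_iff, Set.mem_setOf_eq] <;> tauto
    rw [e0, hP y' 0] at h0
    rw [e1, hP y' 1] at h1
    field_simp at h0 h1
    have hc2 : (0:ℝ) < Pr μ {ω | X ω = x ∧ Y ω = y' ∧ G ω = 1} *
        Pr μ {ω | X ω = x ∧ Y ω = y' ∧ G ω = 1} := mul_pos hCy' hCy'
    apply mul_right_cancel₀ hc2.ne'
    linear_combination Pr μ {ω | X ω = x ∧ Y ω = y' ∧ G ω = 1} *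
      (Pr μ {ω | R ω = 1 ∧ X ω = x ∧ Y ω = y' ∧ G ω = 1} * h0 -
      Pr μ {ω | R ω = 0 ∧ X ω = x ∧ Y ω = y' ∧ G ω = 1} * h1)
  have key_y := key y hCy
  have key_z := key 0 hCz
  -- rewrite the cPr numerators on the LHS
  have eL : ∀ (y' : ℝ) (r : ℕ),
      Pr μ ({ω | Y ω = y'} ∩ {ω | R ω = r ∧ X ω = x ∧ M ω = m ∧ G ω = 1}) =
      Pr μ {ω | X ω = x ∧ M ω = m ∧ Y ω = y' ∧ R ω = r ∧ G ω = 1} := by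
    intro y' r; apply Pr_congr'; ext ω
    simp only [Set.mem_inter_iff, Set.mem_setOf_eq] <;> tauto
  unfold OddsR cPr
  rw [eL y 0, eL y 1, eL 0 0, eL 0 1, hP y 0, hP y 1, hP 0 0, hP 0 1]
  set ay0 := Pr μ {ω | X ω = x ∧ M ω = m ∧ Y ω = y ∧ R ω = 0 ∧ G ω = 1} with hay0
  set ay1 := Pr μ {ω | X ω = x ∧ M ω = m ∧ Y ω = y ∧ R ω = 1 ∧ G ω = 1} with hay1
  set az0 := Pr μ {ω | X ω = x ∧ M ω = m ∧ Y ω = 0 ∧ R ω = 0 ∧ G ω = 1} with haz0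
  set az1 := Pr μ {ω | X ω = x ∧ M ω = m ∧ Y ω = 0 ∧ R ω = 1 ∧ G ω = 1} with haz1
  set b0 := Pr μ {ω | R ω = 0 ∧ X ω = x ∧ M ω = m ∧ G ω = 1} with hb0
  set b1 := Pr μ {ω | R ω = 1 ∧ X ω = x ∧ M ω = m ∧ G ω = 1} with hb1
  set cy := Pr μ {ω | X ω = x ∧ Y ω = y ∧ G ω = 1} with hcy
  set cz := Pr μ {ω | X ω = x ∧ Y ω = 0 ∧ G ω = 1} with hcz
  set p0y := Pr μ {ω | R ω = 0 ∧ X ω = x ∧ Y ω = y ∧ G ω = 1} with hp0y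
  set p1y := Pr μ {ω | R ω = 1 ∧ X ω = x ∧ Y ω = y ∧ G ω = 1} with hp1y
  set p0z := Pr μ {ω | R ω = 0 ∧ X ω = x ∧ Y ω = 0 ∧ G ω = 1} with hp0z
  set p1z := Pr μ {ω | R ω = 1 ∧ X ω = x ∧ Y ω = 0 ∧ G ω = 1} with hp1z
  have h1 : ay0 / b0 / (ay1 / b1) * (az1 / b1 / (az0 / b0)) = (ay0 * az1) / (ay1 * az0) := by
    field_simp <;> ring
  have h2 : p0y / cy * (p1z / cz) / (p1y / cy * (p0z / cz)) = (p0y * p1z) / (p1y * p0z) := by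
    field_simp <;> ring
  rw [h1, h2, div_eq_div_iff (by positivity) (by positivity)]
  linear_combination (az1 * p0z) * key_y - (ay1 * p0y) * key_z
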